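/- Let P be a probability distribution over functions ψ: W → ℝ, where W ⊆ ℝ^d is a closed convex set, such that every ψ in the support of P is G-Lipschitz and β-smooth, and the expected function Ψ(w) := E_{ψ∼P}[ψ(w)] is μ-strongly convex on W. Then for any x, y ∈ W and any step-size η ≤ μ/β², the projected gradient step G(w; ψ, η) := Π_W(w − η∇ψ(w)) satisfies E_{ψ∼P} ‖G(x; ψ, η) − G(y; ψ, η)‖ ≤ (1 − ημ/2)‖x − y‖. -/

import Mathlib

open MeasureTheory InnerProductSpace Set Filter Topology

local notation "⟪" x ", " y "⟫" => @inner ℝ _ _ x y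

section Aux

variable {E : Type*} [NormedAddCommGroup E] [InnerProductSpace ℝ E]

lemma aux_proj_nonexpansive {W : Set E} (hWconv : Convex ℝ W)
    (proj : E → E) (hproj : ∀ x, proj x ∈ W ∧ ∀ w ∈ W, ‖x - proj x‖ ≤ ‖x - w‖)
    (a b : E) : ‖proj a - proj b‖ ≤ ‖a - b‖ := by
  have hvar : ∀ u, ∀ w ∈ W, ⟪u - proj u, w - proj u⟫ ≤ 0 := by
    intro u
    haveI : Nonempty W := ⟨⟨proj u, (hproj u).1⟩⟩
    rw [← norm_eq_iInf_iff_real_inner_le_zero hWconv (hproj u).1]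
    refine le_antisymm (le_ciInf fun w => (hproj u).2 w w.2)
      (ciInf_le (⟨0, ?_⟩ : BddBelow (Set.range fun w : W => ‖u - (w : E)‖)) ⟨proj u, (hproj u).1⟩)
    rintro r ⟨w, rfl⟩
    exact norm_nonneg _
  have h1 := hvar a (proj b) (hproj b).1
  have h2 := hvar b (proj a) (hproj a).1
  have key : ‖proj a - proj b‖ ^ 2 ≤ ⟪a - b, proj a - proj b⟫ := by
    have e : ⟪proj a - proj b, proj a - proj b⟫
        = ⟪a - b, proj a - proj b⟫ + ⟪a - proj a, proj b - proj a⟫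
          + ⟪b - proj b, proj a - proj b⟫ := by
      simp only [inner_sub_left, inner_sub_right]; ring
    rw [← real_inner_self_eq_norm_sq]
    linarith
  have h3 := real_inner_le_norm (a - b) (proj a - proj b)
  nlinarith [norm_nonneg (proj a - proj b), norm_nonneg (a - b)]

lemma aux_smooth_bound [CompleteSpace E] {W : Set E} (hW : Convex ℝ W) {f : E → ℝ}
    (hf : Differentiable ℝ f) {β : ℝ} (hβ : 0 ≤ β)
    (hs : ∀ x ∈ W, ∀ y ∈ W, ‖gradient f x - gradient f y‖ ≤ β * ‖x - y‖)
    {a b : E} (ha : a ∈ W) (hb : b ∈ W) :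
    |f b - f a - ⟪gradient f a, b - a⟫| ≤ β * ‖b - a‖ ^ 2 := by
  have hnorm : ∀ z, ‖fderiv ℝ f z - fderiv ℝ f a‖ = ‖gradient f z - gradient f a‖ := by
    intro z
    have e : gradient f z - gradient f a = (toDual ℝ E).symm (fderiv ℝ f z - fderiv ℝ f a) := by
      rw [map_sub]; rfl
    rw [e, LinearIsometryEquiv.norm_map]
  have hbound : ∀ z ∈ segment ℝ a b, ‖fderiv ℝ f z - fderiv ℝ f a‖ ≤ β * ‖b - a‖ := by
    intro z hz
    rw [hnorm]
    rw [segment_eq_image' ℝ a b] at hz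
    obtain ⟨t, ⟨ht0, ht1⟩, rfl⟩ := hz
    have hzW : a + t • (b - a) ∈ W := hW.add_smul_sub_mem ha hb ⟨ht0, ht1⟩
    calc ‖gradient f (a + t • (b - a)) - gradient f a‖
        ≤ β * ‖a + t • (b - a) - a‖ := hs _ hzW a ha
      _ = β * (t * ‖b - a‖) := by
          rw [add_sub_cancel_left, norm_smul, Real.norm_eq_abs, abs_of_nonneg ht0]
      _ ≤ β * ‖b - a‖ := by nlinarith [mul_nonneg (mul_nonneg hβ (norm_nonneg (b - a))) (sub_nonneg.2 ht1)]
  have hmain := (convex_segment a b).norm_image_sub_le_of_norm_fderiv_le'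
    (fun z _ => (hf z)) hbound (left_mem_segment ℝ a b) (right_mem_segment ℝ a b)
  have e2 : ⟪gradient f a, b - a⟫ = fderiv ℝ f a (b - a) := toDual_symm_apply
  rw [e2]
  rw [Real.norm_eq_abs] at hmain
  calc |f b - f a - fderiv ℝ f a (b - a)| ≤ β * ‖b - a‖ * ‖b - a‖ := hmain
    _ = β * ‖b - a‖ ^ 2 := by ring

lemma aux_limit {a b C : ℝ} (h : ∀ t : ℝ, 0 < t → t ≤ 1 → a ≤ b + t * C) : a ≤ b := by
  rcases le_or_gt C 0 with hC | hC
  · have h1 := h 1 one_pos le_rfl; nlinarith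
  · refine le_of_forall_pos_le_add fun ε hε => ?_
    have ht0 : 0 < min 1 (ε / C) := lt_min one_pos (div_pos hε hC)
    have h1 := h _ ht0 (min_le_left _ _)
    have h2 : min 1 (ε / C) * C ≤ ε := by
      calc min 1 (ε / C) * C ≤ (ε / C) * C :=
            mul_le_mul_of_nonneg_right (min_le_right _ _) hC.le
        _ = ε := by field_simp
    linarith

end Aux


set_option maxHeartbeats 1600000 in
/-- A projected gradient step on a random function drawn from a
distribution whose expectation is strongly convex is contractive in expectation
(Lemma 3.4 of the paper). -/
theorem expected_contraction_of_gradient_step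
    {d : ℕ} {Ω : Type*} [MeasurableSpace Ω] (P : Measure Ω) [IsProbabilityMeasure P]
    (W : Set (EuclideanSpace ℝ (Fin d))) (hWconv : Convex ℝ W) (hWclosed : IsClosed W)
    -- `proj` is the Euclidean orthogonal projection onto `W`
    (proj : EuclideanSpace ℝ (Fin d) → EuclideanSpace ℝ (Fin d))
    (hproj : ∀ x, proj x ∈ W ∧ ∀ w ∈ W, ‖x - proj x‖ ≤ ‖x - w‖)
    -- the random function `ψ`
    (ψ : Ω → EuclideanSpace ℝ (Fin d) → ℝ)
    (G β μ η : ℝ) (hG : 0 < G) (hβ : 0 < β) (hμ : 0 < μ)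
    (hη0 : 0 ≤ η) (hη : η ≤ μ / β ^ 2)
    (hdiff : ∀ ω, Differentiable ℝ (ψ ω))
    -- every `ψ` in the support is `G`-Lipschitz on `W`
    (hLip : ∀ ω, ∀ w ∈ W, ‖gradient (ψ ω) w‖ ≤ G)
    -- every `ψ` in the support is `β`-smooth on `W`
    (hsmooth : ∀ ω, ∀ x ∈ W, ∀ y ∈ W,
      ‖gradient (ψ ω) x - gradient (ψ ω) y‖ ≤ β * ‖x - y‖)
    (hInt : ∀ w : EuclideanSpace ℝ (Fin d), Integrable (fun ω => ψ ω w) P)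
    -- the expected function `Ψ(w) = E ψ(w)` is `μ`-strongly convex on `W`
    (hstrong : ∀ x ∈ W, ∀ y ∈ W,
      (∫ ω, ψ ω x ∂P) + (inner ℝ (gradient (fun w => ∫ ω, ψ ω w ∂P) x) (y - x) : ℝ)
        + μ / 2 * ‖y - x‖ ^ 2 ≤ ∫ ω, ψ ω y ∂P)
    (x y : EuclideanSpace ℝ (Fin d)) (hx : x ∈ W) (hy : y ∈ W)
    (hIntStep : Integrable
      (fun ω => ‖proj (x - η • gradient (ψ ω) x) - proj (y - η • gradient (ψ ω) y)‖) P) :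
    ∫ ω, ‖proj (x - η • gradient (ψ ω) x) - proj (y - η • gradient (ψ ω) y)‖ ∂P
      ≤ (1 - η * μ / 2) * ‖x - y‖ := by
  rcases eq_or_ne x y with rfl | hxy
  · simp
  -- measurability of directional derivatives
  have hE : ∀ (w u : EuclideanSpace ℝ (Fin d)),
      AEStronglyMeasurable (fun ω => fderiv ℝ (ψ ω) w u) P := by
    intro w u
    have hseq : ∀ n : ℕ, AEStronglyMeasurable
        (fun ω => ((n : ℝ) + 1) * (ψ ω (w + ((n : ℝ) + 1)⁻¹ • u) - ψ ω w)) P :=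
      fun n => (((hInt _).1.sub (hInt w).1).const_mul _)
    refine aestronglyMeasurable_of_tendsto_ae atTop hseq (ae_of_all _ fun ω => ?_)
    have h1 : HasDerivAt (fun t : ℝ => w + t • u) u 0 := by
      simpa using ((hasDerivAt_id (0 : ℝ)).smul_const u).const_add w
    have h2 : HasFDerivAt (ψ ω) (fderiv ℝ (ψ ω) w) (w + (0 : ℝ) • u) := by
      simpa using ((hdiff ω) w).hasFDerivAt
    have h3 : HasDerivAt (fun t : ℝ => ψ ω (w + t • u)) (fderiv ℝ (ψ ω) w u) 0 :=
      h2.comp_hasDerivAt 0 h1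
    have h4 := hasDerivAt_iff_tendsto_slope.1 h3
    have h5 : Tendsto (fun n : ℕ => ((n : ℝ) + 1)⁻¹) atTop (𝓝[≠] (0 : ℝ)) := by
      apply tendsto_nhdsWithin_of_tendsto_nhds_of_eventually_within
      · simpa only [one_div] using (tendsto_one_div_add_atTop_nhds_zero_nat :
          Tendsto (fun n : ℕ => 1 / ((n : ℝ) + 1)) atTop (𝓝 0))
      · exact Eventually.of_forall fun n => by
          have : (0:ℝ) < (n : ℝ) + 1 := by positivity
          exact ne_of_gt (by positivity)
    have h6 := h4.comp h5
    refine h6.congr fun n => ?_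
    have hne : ((n : ℝ) + 1)⁻¹ ≠ 0 := by positivity
    simp only [Function.comp_apply, slope_def_field, div_eq_iff hne]
    field_simp
    ring_nf
    simp
  -- measurability of the gradient
  have hgm : ∀ w, AEStronglyMeasurable (fun ω => gradient (ψ ω) w) P := by
    intro w
    have hrep : ∀ ω, gradient (ψ ω) w
        = ∑ i, (fderiv ℝ (ψ ω) w ((EuclideanSpace.basisFun (Fin d) ℝ) i))
            • (EuclideanSpace.basisFun (Fin d) ℝ) i := by
      intro ω
      have hb := (EuclideanSpace.basisFun (Fin d) ℝ).sum_repr' (gradient (ψ ω) w)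
      conv_lhs => rw [← hb]
      refine Finset.sum_congr rfl fun i _ => ?_
      congr 1
      rw [real_inner_comm]
      exact (InnerProductSpace.toDual_symm_apply (𝕜 := ℝ) (E := EuclideanSpace ℝ (Fin d))
        (y := fderiv ℝ (ψ ω) w) (x := EuclideanSpace.basisFun (Fin d) ℝ i))
    rw [show (fun ω => gradient (ψ ω) w) = _ from funext hrep]
    exact Finset.aestronglyMeasurable_fun_sum _ fun i _ => (hE w _).smul_const _
  -- integrability of inner products with the gradient
  have hgi : ∀ w ∈ W, ∀ u : EuclideanSpace ℝ (Fin d),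
      Integrable (fun ω => (inner ℝ (gradient (ψ ω) w) u : ℝ)) P := by
    intro w hw u
    refine ⟨(hgm w).inner aestronglyMeasurable_const,
      HasFiniteIntegral.of_bounded (C := G * ‖u‖) (ae_of_all _ fun ω => ?_)⟩
    rw [Real.norm_eq_abs]
    exact le_trans (abs_real_inner_le_norm _ _)
      (mul_le_mul_of_nonneg_right (hLip ω w hw) (norm_nonneg u))
  -- value form of strong convexity of the expectation along the segment
  have hval : ∀ t : ℝ, 0 ≤ t → t ≤ 1 →
      (∫ ω, ψ ω (x + t • (y - x)) ∂P) + μ / 2 * (t * (1 - t)) * ‖y - x‖ ^ 2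
        ≤ (1 - t) * (∫ ω, ψ ω x ∂P) + t * (∫ ω, ψ ω y ∂P) := by
    intro t ht0 ht1
    have hz : x + t • (y - x) ∈ W := hWconv.add_smul_sub_mem hx hy ⟨ht0, ht1⟩
    have h1 := hstrong _ hz y hy
    have h2 := hstrong _ hz x hx
    have e1 : y - (x + t • (y - x)) = (1 - t) • (y - x) := by module
    have e2 : x - (x + t • (y - x)) = (-t) • (y - x) := by module
    rw [e1] at h1; rw [e2] at h2
    rw [real_inner_smul_right, norm_smul, Real.norm_eq_abs,
      abs_of_nonneg (by linarith : (0:ℝ) ≤ 1 - t)] at h1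
    rw [real_inner_smul_right, norm_smul, Real.norm_eq_abs, abs_neg, abs_of_nonneg ht0] at h2
    nlinarith [mul_le_mul_of_nonneg_left h1 ht0,
      mul_le_mul_of_nonneg_left h2 (by linarith : (0:ℝ) ≤ 1 - t), sq_nonneg ‖y - x‖]
  -- integrated smoothness bound
  have hsm_int : ∀ a, a ∈ W → ∀ b, b ∈ W →
      |(∫ ω, ψ ω b ∂P) - (∫ ω, ψ ω a ∂P)
          - ∫ ω, (inner ℝ (gradient (ψ ω) a) (b - a) : ℝ) ∂P|
        ≤ β * ‖b - a‖ ^ 2 := by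
    intro a ha b hb
    have hInt1 : Integrable
        (fun ω => ψ ω b - ψ ω a - (inner ℝ (gradient (ψ ω) a) (b - a) : ℝ)) P :=
      ((hInt b).sub (hInt a)).sub (hgi a ha (b - a))
    have hba : Integrable (fun ω => ψ ω b - ψ ω a) P := (hInt b).sub (hInt a)
    have e : (∫ ω, ψ ω b ∂P) - (∫ ω, ψ ω a ∂P)
          - (∫ ω, (inner ℝ (gradient (ψ ω) a) (b - a) : ℝ) ∂P)
        = ∫ ω, (ψ ω b - ψ ω a - (inner ℝ (gradient (ψ ω) a) (b - a) : ℝ)) ∂P := by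
      rw [integral_sub hba (hgi a ha (b - a)), integral_sub (hInt b) (hInt a)]
    rw [e]
    calc |∫ ω, (ψ ω b - ψ ω a - (inner ℝ (gradient (ψ ω) a) (b - a) : ℝ)) ∂P|
        ≤ ∫ ω, |ψ ω b - ψ ω a - (inner ℝ (gradient (ψ ω) a) (b - a) : ℝ)| ∂P := by
          simpa [Real.norm_eq_abs] using norm_integral_le_integral_norm (μ := P)
            (fun ω => ψ ω b - ψ ω a - (inner ℝ (gradient (ψ ω) a) (b - a) : ℝ))
      _ ≤ ∫ _ω, β * ‖b - a‖ ^ 2 ∂P := integral_mono hInt1.abs (integrable_const _)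
            (fun ω => aux_smooth_bound hWconv (hdiff ω) hβ.le (hsmooth ω) ha hb)
      _ = β * ‖b - a‖ ^ 2 := by simp
  -- bound on ∫ ⟪∇ψ(x), y - x⟫
  have hA : (∫ ω, (inner ℝ (gradient (ψ ω) x) (y - x) : ℝ) ∂P)
      ≤ (∫ ω, ψ ω y ∂P) - (∫ ω, ψ ω x ∂P) - μ / 2 * ‖y - x‖ ^ 2 := by
    apply aux_limit (C := (μ / 2 + β) * ‖y - x‖ ^ 2)
    intro t ht0 ht1
    have hz : x + t • (y - x) ∈ W := hWconv.add_smul_sub_mem hx hy ⟨ht0.le, ht1⟩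
    have h1 := hsm_int x hx _ hz
    have e : (x + t • (y - x)) - x = t • (y - x) := by module
    rw [e] at h1
    have e2 : (∫ ω, (inner ℝ (gradient (ψ ω) x) (t • (y - x)) : ℝ) ∂P)
        = t * ∫ ω, (inner ℝ (gradient (ψ ω) x) (y - x) : ℝ) ∂P := by
      simp_rw [real_inner_smul_right]
      exact integral_const_mul t _
    rw [e2, norm_smul, Real.norm_eq_abs, abs_of_pos ht0] at h1
    have h2 := hval t ht0.le ht1
    have habs := abs_le.1 h1
    rw [← mul_le_mul_iff_right₀ ht0]
    nlinarith [habs.1, h2]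
  -- bound on ∫ ⟪∇ψ(y), y - x⟫
  have hB : (∫ ω, ψ ω y ∂P) - (∫ ω, ψ ω x ∂P) + μ / 2 * ‖y - x‖ ^ 2
      ≤ ∫ ω, (inner ℝ (gradient (ψ ω) y) (y - x) : ℝ) ∂P := by
    apply aux_limit (C := (μ / 2 + β) * ‖y - x‖ ^ 2)
    intro s hs0 hs1
    have ht0 : (0:ℝ) ≤ 1 - s := by linarith
    have hz : x + (1 - s) • (y - x) ∈ W := hWconv.add_smul_sub_mem hx hy ⟨ht0, by linarith⟩
    have h1 := hsm_int y hy _ hz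
    have e : (x + (1 - s) • (y - x)) - y = (-s) • (y - x) := by module
    rw [e] at h1
    have e2 : (∫ ω, (inner ℝ (gradient (ψ ω) y) ((-s) • (y - x)) : ℝ) ∂P)
        = (-s) * ∫ ω, (inner ℝ (gradient (ψ ω) y) (y - x) : ℝ) ∂P := by
      simp_rw [real_inner_smul_right]
      exact integral_const_mul _ _
    rw [e2, norm_smul, Real.norm_eq_abs, abs_neg, abs_of_pos hs0] at h1
    have h2 := hval (1 - s) ht0 (by linarith)
    have habs := abs_le.1 h1
    rw [← mul_le_mul_iff_right₀ hs0]
    nlinarith [habs.1, h2]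
  -- integrability and lower bound for the key inner product
  have hKint : Integrable
      (fun ω => (inner ℝ (gradient (ψ ω) x - gradient (ψ ω) y) (x - y) : ℝ)) P := by
    have e : (fun ω => (inner ℝ (gradient (ψ ω) x - gradient (ψ ω) y) (x - y) : ℝ))
        = fun ω => (inner ℝ (gradient (ψ ω) x) (x - y) : ℝ)
            - (inner ℝ (gradient (ψ ω) y) (x - y) : ℝ) := by
      funext ω; rw [inner_sub_left]
    rw [e]; exact (hgi x hx _).sub (hgi y hy _)
  have hK : μ * ‖y - x‖ ^ 2
      ≤ ∫ ω, (inner ℝ (gradient (ψ ω) x - gradient (ψ ω) y) (x - y) : ℝ) ∂P := by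
    have e : ∀ ω, (inner ℝ (gradient (ψ ω) x - gradient (ψ ω) y) (x - y) : ℝ)
        = (inner ℝ (gradient (ψ ω) y) (y - x) : ℝ)
            - (inner ℝ (gradient (ψ ω) x) (y - x) : ℝ) := by
      intro ω
      simp only [inner_sub_left, inner_sub_right]
      ring
    calc μ * ‖y - x‖ ^ 2
        ≤ (∫ ω, (inner ℝ (gradient (ψ ω) y) (y - x) : ℝ) ∂P)
          - ∫ ω, (inner ℝ (gradient (ψ ω) x) (y - x) : ℝ) ∂P := by linarith
      _ = ∫ ω, (inner ℝ (gradient (ψ ω) x - gradient (ψ ω) y) (x - y) : ℝ) ∂P := by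
          rw [← integral_sub (hgi y hy _) (hgi x hx _)]
          exact integral_congr_ae (ae_of_all _ fun ω => (e ω).symm)
  -- μ ≤ β
  have hyx : (0:ℝ) < ‖y - x‖ := by
    rw [norm_pos_iff, sub_ne_zero]
    exact fun h => hxy h.symm
  have hxy' : (0:ℝ) < ‖x - y‖ := by
    rw [norm_pos_iff, sub_ne_zero]; exact hxy
  have hnr : ‖x - y‖ = ‖y - x‖ := norm_sub_rev x y
  have hKub : (∫ ω, (inner ℝ (gradient (ψ ω) x - gradient (ψ ω) y) (x - y) : ℝ) ∂P)
      ≤ β * ‖y - x‖ ^ 2 := by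
    calc (∫ ω, (inner ℝ (gradient (ψ ω) x - gradient (ψ ω) y) (x - y) : ℝ) ∂P)
        ≤ ∫ _ω, β * ‖y - x‖ ^ 2 ∂P := by
          refine integral_mono hKint (integrable_const _) fun ω => ?_
          have h1 := real_inner_le_norm (gradient (ψ ω) x - gradient (ψ ω) y) (x - y)
          have h2 := hsmooth ω x hx y hy
          rw [hnr] at h2
          nlinarith [norm_nonneg (x - y), norm_nonneg (gradient (ψ ω) x - gradient (ψ ω) y)]
      _ = β * ‖y - x‖ ^ 2 := by simp
  have hμβ : μ ≤ β := by nlinarith [hK, hKub, mul_pos hyx hyx]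
  have hβ2 : η * β ^ 2 ≤ μ := (le_div_iff₀ (by positivity)).1 hη
  have hημ : η * μ ≤ 1 := by nlinarith [mul_le_mul_of_nonneg_left hμβ hη0]
  -- integrability of ‖Δg‖²
  have hgsm : AEStronglyMeasurable (fun ω => gradient (ψ ω) x - gradient (ψ ω) y) P :=
    (hgm x).sub (hgm y)
  have hSmeas : AEStronglyMeasurable
      (fun ω => ‖gradient (ψ ω) x - gradient (ψ ω) y‖ ^ 2) P := by
    simpa [sq] using hgsm.norm.fun_mul hgsm.norm
  have hSint : Integrable (fun ω => ‖gradient (ψ ω) x - gradient (ψ ω) y‖ ^ 2) P := by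
    refine ⟨hSmeas, HasFiniteIntegral.of_bounded (C := (β * ‖x - y‖) ^ 2)
      (ae_of_all _ fun ω => ?_)⟩
    rw [Real.norm_eq_abs, abs_of_nonneg (by positivity)]
    have h2 := hsmooth ω x hx y hy
    nlinarith [norm_nonneg (gradient (ψ ω) x - gradient (ψ ω) y)]
  have hS : (∫ ω, ‖gradient (ψ ω) x - gradient (ψ ω) y‖ ^ 2 ∂P) ≤ β ^ 2 * ‖x - y‖ ^ 2 := by
    calc (∫ ω, ‖gradient (ψ ω) x - gradient (ψ ω) y‖ ^ 2 ∂P)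
        ≤ ∫ _ω, β ^ 2 * ‖x - y‖ ^ 2 ∂P := by
          refine integral_mono hSint (integrable_const _) fun ω => ?_
          have h2 := hsmooth ω x hx y hy
          nlinarith [norm_nonneg (gradient (ψ ω) x - gradient (ψ ω) y),
            mul_nonneg hβ.le (norm_nonneg (x - y))]
      _ = β ^ 2 * ‖x - y‖ ^ 2 := by simp
  -- expansion of the squared step difference
  have hNsq : ∀ ω, ‖(x - y) - η • (gradient (ψ ω) x - gradient (ψ ω) y)‖ ^ 2
      = ‖x - y‖ ^ 2
        - 2 * η * (inner ℝ (gradient (ψ ω) x - gradient (ψ ω) y) (x - y) : ℝ)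
        + η ^ 2 * ‖gradient (ψ ω) x - gradient (ψ ω) y‖ ^ 2 := by
    intro ω
    rw [norm_sub_sq_real, real_inner_smul_right, norm_smul, Real.norm_eq_abs,
      abs_of_nonneg hη0, mul_pow, real_inner_comm]
    ring
  have hNint : Integrable
      (fun ω => ‖(x - y) - η • (gradient (ψ ω) x - gradient (ψ ω) y)‖ ^ 2) P := by
    rw [show (fun ω => ‖(x - y) - η • (gradient (ψ ω) x - gradient (ψ ω) y)‖ ^ 2) = _
      from funext hNsq]
    exact ((integrable_const _).sub (hKint.const_mul _)).add (hSint.const_mul _)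
  have hNval : (∫ ω, ‖(x - y) - η • (gradient (ψ ω) x - gradient (ψ ω) y)‖ ^ 2 ∂P)
      ≤ (1 - η * μ) * ‖x - y‖ ^ 2 := by
    have e : (∫ ω, ‖(x - y) - η • (gradient (ψ ω) x - gradient (ψ ω) y)‖ ^ 2 ∂P)
        = ‖x - y‖ ^ 2
          - 2 * η * (∫ ω, (inner ℝ (gradient (ψ ω) x - gradient (ψ ω) y) (x - y) : ℝ) ∂P)
          + η ^ 2 * ∫ ω, ‖gradient (ψ ω) x - gradient (ψ ω) y‖ ^ 2 ∂P := by
      have hc1 : Integrable (fun ω =>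
          ‖x - y‖ ^ 2 - 2 * η * (inner ℝ (gradient (ψ ω) x - gradient (ψ ω) y) (x - y) : ℝ)) P :=
        (integrable_const _).sub (hKint.const_mul _)
      rw [show (fun ω => ‖(x - y) - η • (gradient (ψ ω) x - gradient (ψ ω) y)‖ ^ 2) = _
        from funext hNsq]
      rw [integral_add hc1 (hSint.const_mul _),
        integral_sub (integrable_const _) (hKint.const_mul _),
        integral_const_mul, integral_const_mul, integral_const]
      simp [measure_univ]
    rw [e]
    rw [← hnr] at hK
    nlinarith [mul_le_mul_of_nonneg_left hK (by positivity : (0:ℝ) ≤ 2 * η),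
      mul_le_mul_of_nonneg_left hS (sq_nonneg η),
      mul_le_mul_of_nonneg_right (mul_le_mul_of_nonneg_left hβ2 hη0)
        (sq_nonneg ‖x - y‖)]
  -- final assembly
  set c : ℝ := (1 - η * μ / 2) * ‖x - y‖ with hc
  have hc0 : 0 < c := by
    apply mul_pos _ hxy'
    nlinarith
  have hptw : ∀ ω, ‖proj (x - η • gradient (ψ ω) x) - proj (y - η • gradient (ψ ω) y)‖
      ≤ (2 * c)⁻¹ * ‖(x - y) - η • (gradient (ψ ω) x - gradient (ψ ω) y)‖ ^ 2 + c / 2 := by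
    intro ω
    have h1 : ‖proj (x - η • gradient (ψ ω) x) - proj (y - η • gradient (ψ ω) y)‖
        ≤ ‖(x - η • gradient (ψ ω) x) - (y - η • gradient (ψ ω) y)‖ :=
      aux_proj_nonexpansive hWconv proj hproj _ _
    have e : (x - η • gradient (ψ ω) x) - (y - η • gradient (ψ ω) y)
        = (x - y) - η • (gradient (ψ ω) x - gradient (ψ ω) y) := by module
    rw [e] at h1
    refine h1.trans ?_
    set N := ‖(x - y) - η • (gradient (ψ ω) x - gradient (ψ ω) y)‖ with hN
    have hN0 : 0 ≤ N := norm_nonneg _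
    have h2c : (0:ℝ) < 2 * c := by linarith
    have key : N * (2 * c) ≤ N ^ 2 + c ^ 2 := by nlinarith [sq_nonneg (N - c)]
    calc N = N * (2 * c) / (2 * c) := by field_simp
      _ ≤ (N ^ 2 + c ^ 2) / (2 * c) := (div_le_div_iff_of_pos_right h2c).2 key
      _ = (2 * c)⁻¹ * N ^ 2 + c / 2 := by field_simp
  calc (∫ ω, ‖proj (x - η • gradient (ψ ω) x) - proj (y - η • gradient (ψ ω) y)‖ ∂P)
      ≤ ∫ ω, ((2 * c)⁻¹ * ‖(x - y) - η • (gradient (ψ ω) x - gradient (ψ ω) y)‖ ^ 2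
          + c / 2) ∂P :=
        integral_mono hIntStep ((hNint.const_mul _).add (integrable_const _)) hptw
    _ = (2 * c)⁻¹ * (∫ ω, ‖(x - y) - η • (gradient (ψ ω) x - gradient (ψ ω) y)‖ ^ 2 ∂P)
          + c / 2 := by
        rw [integral_add (hNint.const_mul _) (integrable_const _), integral_const_mul,
          integral_const]
        simp [measure_univ]
    _ ≤ (2 * c)⁻¹ * ((1 - η * μ) * ‖x - y‖ ^ 2) + c / 2 :=
        add_le_add_left (mul_le_mul_of_nonneg_left hNval (by positivity)) _
    _ ≤ (1 - η * μ / 2) * ‖x - y‖ := by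
        have hsq : (1 - η * μ) * ‖x - y‖ ^ 2 ≤ c ^ 2 := by
          rw [hc]
          nlinarith [sq_nonneg (η * μ * ‖x - y‖)]
        have h3 : (2 * c)⁻¹ * ((1 - η * μ) * ‖x - y‖ ^ 2) ≤ (2 * c)⁻¹ * c ^ 2 :=
          mul_le_mul_of_nonneg_left hsq (by positivity)
        have e3 : (2 * c)⁻¹ * c ^ 2 + c / 2 = c := by field_simp; ring
        calc (2 * c)⁻¹ * ((1 - η * μ) * ‖x - y‖ ^ 2) + c / 2
            ≤ (2 * c)⁻¹ * c ^ 2 + c / 2 := by linarith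
          _ = c := e3
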